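/- Assume ((a+b)/2)·Φ^(2) > 1. Consider the multi-type branching process T^Poi where the root has a uniform spin in {+,-} and weight governed by ν. Then, conditionally on the event that the branching process does not go extinct, Br(T^Poi) ≤ ((a+b)/2)·Φ^(2) almost surely. -/

import Mathlib

noncomputable section

/-- The Poisson probability mass function with mean `r`. -/
def poissonPMF (r : ℝ) (k : ℕ) : ℝ := Real.exp (-r) * r ^ k / (Nat.factorial k)

/-- The first moment `Φ⁽¹⁾` of a law on `ℝ`. -/
def firstMoment (ν : MeasureTheory.Measure ℝ) : ℝ := ∫ x, x ∂ν

/-- The second moment `Φ⁽²⁾` of a law on `ℝ`. -/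
def secondMoment (ν : MeasureTheory.Measure ℝ) : ℝ := ∫ x, x ^ 2 ∂ν

/-- The size-biased version `ν*` of `ν`, given by `ν*(dx) = x·ν(dx)/Φ⁽¹⁾`. -/
def sizeBiased (ν : MeasureTheory.Measure ℝ) : MeasureTheory.Measure ℝ :=
  ν.withDensity fun x => ENNReal.ofReal (x / firstMoment ν)

/-- The multi-type branching process `T^Poi` with spins and weights.  Vertices are encoded as
lists of child indices (the root is `[]`).  For every potential vertex `v`, `nSame v` and
`nOpp v` are the numbers of children of `v` having respectively the same spin as `v` and the
opposite spin (children with the same spin are listed first), and `wt v` is the weight of `v`.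
The defining properties: all these random variables are independent across vertices and of the
uniform root spin; the root weight has law `ν` and all other weights have the size-biased law
`ν*`; and conditionally on its weight `x`, a vertex has `Poi((a/2)·Φ⁽¹⁾·x)` same-spin children
and, independently, `Poi((b/2)·Φ⁽¹⁾·x)` opposite-spin children. -/
structure TPoiTree (a b : ℝ) (ν : MeasureTheory.Measure ℝ) where
  Ω : Type
  [mΩ : MeasurableSpace Ω]
  P : MeasureTheory.Measure Ω
  hP : MeasureTheory.IsProbabilityMeasure P
  nSame : List ℕ → Ω → ℕ
  nOpp : List ℕ → Ω → ℕ
  wt : List ℕ → Ω → ℝ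
  rootSpin : Ω → Bool
  meas_nSame : ∀ v, Measurable (nSame v)
  meas_nOpp : ∀ v, Measurable (nOpp v)
  meas_wt : ∀ v, Measurable (wt v)
  meas_rootSpin : Measurable rootSpin
  rootSpin_unif : P {ω | rootSpin ω = true} = 1 / 2
  indep : ProbabilityTheory.iIndepFun
    (β := fun _ : Option (List ℕ) => ℕ × ℕ × ℝ × Bool)
    (fun o ω => match o with
      | none => ((0 : ℕ), (0 : ℕ), (0 : ℝ), rootSpin ω)
      | some v => (nSame v ω, nOpp v ω, wt v ω, false)) P
  root_law : ∀ (j k : ℕ) (B : Set ℝ), MeasurableSet B →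
    P {ω | wt [] ω ∈ B ∧ nSame [] ω = j ∧ nOpp [] ω = k}
      = ∫⁻ x in B, ENNReal.ofReal (poissonPMF (a / 2 * firstMoment ν * x) j *
          poissonPMF (b / 2 * firstMoment ν * x) k) ∂ν
  child_law : ∀ v : List ℕ, v ≠ [] → ∀ (j k : ℕ) (B : Set ℝ), MeasurableSet B →
    P {ω | wt v ω ∈ B ∧ nSame v ω = j ∧ nOpp v ω = k}
      = ∫⁻ x in B, ENNReal.ofReal (poissonPMF (a / 2 * firstMoment ν * x) j *
          poissonPMF (b / 2 * firstMoment ν * x) k) ∂(sizeBiased ν)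

/-- Membership of a vertex in the branching-process tree: each step of the path must select
an existing child. -/
def memTree {a b : ℝ} {ν : MeasureTheory.Measure ℝ} (M : TPoiTree a b ν) (ω : M.Ω)
    (v : List ℕ) : Prop :=
  ∀ k : ℕ, ∀ h : k < v.length,
    v.get ⟨k, h⟩ < M.nSame (v.take k) ω + M.nOpp (v.take k) ω

/-- The spin of a vertex `v` of the tree: the spin flips along the path from the root exactly
at the steps whose child index is `≥ nSame` of the parent (same-spin children come first). -/
def treeSpin {a b : ℝ} {ν : MeasureTheory.Measure ℝ} (M : TPoiTree a b ν) (ω : M.Ω)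
    (v : List ℕ) : Bool :=
  xor (M.rootSpin ω)
    (decide (Odd (((List.range v.length).filter
      (fun k => decide (M.nSame (v.take k) ω ≤ v.getD k 0))).length)))

/-- A rooted tree, encoded as the set of its vertices: each vertex is the list of the child
indices along the path from the root (the root is `[]`).  The set must contain the root and be
closed under taking parents. -/
def IsRootedTree (T : Set (List ℕ)) : Prop :=
  ([] : List ℕ) ∈ T ∧ ∀ (v : List ℕ) (i : ℕ), v ++ [i] ∈ T → v ∈ T

/-- An infinite ray from the root in the tree `T`. -/
def IsRay (T : Set (List ℕ)) (f : ℕ → List ℕ) : Prop :=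
  f 0 = [] ∧ ∀ k : ℕ, f k ∈ T ∧ ∃ i : ℕ, f (k + 1) = f k ++ [i]

/-- A cutset of the rooted tree `T`: a set of vertices of `T` meeting every infinite ray
from the root. -/
def IsCutset (T : Set (List ℕ)) (Γ : Set (List ℕ)) : Prop :=
  Γ ⊆ T ∧ ∀ f : ℕ → List ℕ, IsRay T f → ∃ k : ℕ, f k ∈ Γ

/-- `∑_{v ∈ Γ} λ^{-|v|}`, the weight of a cutset `Γ` at rate `λ`. -/
def cutsetSum (lam : ℝ) (Γ : Set (List ℕ)) : ENNReal :=
  ∑' v : Γ, ENNReal.ofReal ((1 / lam) ^ (v : List ℕ).length)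

-- The branching number of a rooted tree `T`: it is `0` if `T` is finite and otherwise
-- `sup {λ ≥ 1 : inf_Γ ∑_{v ∈ Γ} λ^{-|v|} > 0}`, the infimum running over all cutsets `Γ`.
open Classical in
def branchingNumber (T : Set (List ℕ)) : ℝ :=
  if T.Infinite then
    sSup {lam : ℝ | 1 ≤ lam ∧ 0 < ⨅ Γ ∈ {Γ' | IsCutset T Γ'}, cutsetSum lam Γ}
  else 0

/-- The subtree of `T` rooted at the `i`-th child of the root, re-rooted at that child. -/
def rootSubtree (T : Set (List ℕ)) (i : ℕ) : Set (List ℕ) :=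
  {w : List ℕ | i :: w ∈ T}

open MeasureTheory ProbabilityTheory Filter Topology


namespace BrAux
open MeasureTheory Filter Topology ENNReal

lemma pois_nonneg {r : ℝ} (hr : 0 ≤ r) (k : ℕ) : 0 ≤ poissonPMF r k := by
  unfold _root_.poissonPMF
  positivity

lemma pois_eq (r : ℝ) (k : ℕ) : poissonPMF r k = Real.exp (-r) * (r ^ k / (Nat.factorial k)) := by
  unfold _root_.poissonPMF; ring

lemma pois_summable (r : ℝ) : Summable (poissonPMF r) := by
  rw [funext (pois_eq r)]
  exact (Real.summable_pow_div_factorial r).mul_left _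

lemma exp_tsum (r : ℝ) : ∑' k : ℕ, r ^ k / (Nat.factorial k) = Real.exp r := by
  rw [Real.exp_eq_exp_ℝ, NormedSpace.exp_eq_tsum_div]

lemma pois_tsum {r : ℝ} : ∑' k, poissonPMF r k = 1 := by
  simp only [pois_eq]
  rw [tsum_mul_left, exp_tsum, ← Real.exp_add]
  simp

lemma pois_succ (r : ℝ) (k : ℕ) :
    ((k + 1 : ℕ) : ℝ) * poissonPMF r (k + 1) = r * poissonPMF r k := by
  simp only [pois_eq, Nat.factorial_succ, pow_succ]
  push_cast
  have h1 : ((Nat.factorial k : ℝ)) ≠ 0 := Nat.cast_ne_zero.2 (Nat.factorial_ne_zero k)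
  have h2 : ((k:ℝ) + 1) ≠ 0 := by positivity
  field_simp

lemma pois_mean_summable (r : ℝ) : Summable (fun k : ℕ => ((k:ℝ)) * poissonPMF r k) := by
  rw [← summable_nat_add_iff 1]
  have : (fun k : ℕ => ((k + 1 : ℕ) : ℝ) * poissonPMF r (k + 1))
      = fun k => r * poissonPMF r k := by
    funext k; exact pois_succ r k
  push_cast at this ⊢
  rw [this]
  exact (pois_summable r).mul_left r

lemma pois_mean {r : ℝ} : ∑' k : ℕ, (k : ℝ) * poissonPMF r k = r := by
  rw [Summable.tsum_eq_zero_add (pois_mean_summable r)]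
  simp only [Nat.cast_zero, zero_mul, zero_add]
  push_cast
  have : (fun k : ℕ => ((k:ℝ) + 1) * poissonPMF r (k + 1)) = fun k => r * poissonPMF r k := by
    funext k
    have := pois_succ r k
    push_cast at this
    exact this
  rw [this, tsum_mul_left, pois_tsum, mul_one]

lemma epois_tsum {r : ℝ} (hr : 0 ≤ r) : ∑' k, ENNReal.ofReal (poissonPMF r k) = 1 := by
  rw [← ENNReal.ofReal_tsum_of_nonneg (pois_nonneg hr) (pois_summable r), pois_tsum,
    ENNReal.ofReal_one]

lemma epois_mean {r : ℝ} (hr : 0 ≤ r) :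
    ∑' k : ℕ, (k : ℝ≥0∞) * ENNReal.ofReal (poissonPMF r k) = ENNReal.ofReal r := by
  have h : ∀ k : ℕ, (k : ℝ≥0∞) * ENNReal.ofReal (poissonPMF r k)
      = ENNReal.ofReal ((k:ℝ) * poissonPMF r k) := by
    intro k
    rw [ENNReal.ofReal_mul (by positivity), ENNReal.ofReal_natCast]
  rw [tsum_congr h, ← ENNReal.ofReal_tsum_of_nonneg
    (fun k => mul_nonneg (by positivity) (pois_nonneg hr k)) (pois_mean_summable r), pois_mean]

lemma epois_pair {rA rB : ℝ} (hA : 0 ≤ rA) (hB : 0 ≤ rB) :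
    ∑' p : ℕ × ℕ, ((p.1 + p.2 : ℕ) : ℝ≥0∞) *
      ENNReal.ofReal (poissonPMF rA p.1 * poissonPMF rB p.2) = ENNReal.ofReal (rA + rB) := by
  have key : ∀ p : ℕ × ℕ, ((p.1 + p.2 : ℕ) : ℝ≥0∞) *
      ENNReal.ofReal (poissonPMF rA p.1 * poissonPMF rB p.2)
      = ((p.1 : ℝ≥0∞) * ENNReal.ofReal (poissonPMF rA p.1)) * ENNReal.ofReal (poissonPMF rB p.2)
        + ENNReal.ofReal (poissonPMF rA p.1) *
          ((p.2 : ℝ≥0∞) * ENNReal.ofReal (poissonPMF rB p.2)) := by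
    intro p
    rw [ENNReal.ofReal_mul (pois_nonneg hA p.1)]
    push_cast
    ring
  rw [tsum_congr key, ENNReal.tsum_prod (f := fun (j : ℕ) (k : ℕ) =>
    ((j : ℝ≥0∞) * ENNReal.ofReal (poissonPMF rA j)) * ENNReal.ofReal (poissonPMF rB k)
      + ENNReal.ofReal (poissonPMF rA j) * ((k : ℝ≥0∞) * ENNReal.ofReal (poissonPMF rB k)))]
  have inner : ∀ j : ℕ,
      (∑' k : ℕ, (((j : ℝ≥0∞) * ENNReal.ofReal (poissonPMF rA j)) * ENNReal.ofReal (poissonPMF rB k)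
        + ENNReal.ofReal (poissonPMF rA j) * ((k : ℝ≥0∞) * ENNReal.ofReal (poissonPMF rB k))))
      = (j : ℝ≥0∞) * ENNReal.ofReal (poissonPMF rA j)
        + ENNReal.ofReal (poissonPMF rA j) * ENNReal.ofReal rB := by
    intro j
    rw [ENNReal.tsum_add, ENNReal.tsum_mul_left, ENNReal.tsum_mul_left, epois_tsum hB,
      epois_mean hB, mul_one]
  rw [tsum_congr inner, ENNReal.tsum_add, epois_mean hA, ENNReal.tsum_mul_right, epois_tsum hA,
    one_mul, ENNReal.ofReal_add hA hB]

lemma meas_poisfn (c : ℝ) (j : ℕ) : Measurable fun x : ℝ => poissonPMF (c * x) j := by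
  unfold _root_.poissonPMF
  fun_prop

end BrAux

namespace BrAux
open MeasureTheory Filter Topology ENNReal

variable {φmin φmax : ℝ} {ν : MeasureTheory.Measure ℝ}

lemma integ_pow [IsProbabilityMeasure ν] (hφmin : 0 < φmin)
    (hsupp : ∀ᵐ x ∂ν, x ∈ Set.Icc φmin φmax) (m : ℕ) :
    Integrable (fun x : ℝ => x ^ m) ν := by
  refine ⟨(measurable_id.pow_const m).aestronglyMeasurable,
    HasFiniteIntegral.of_bounded (C := φmax ^ m) ?_⟩
  filter_upwards [hsupp] with x hx
  rw [Real.norm_eq_abs, abs_pow, abs_of_pos (lt_of_lt_of_le hφmin hx.1)]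
  exact pow_le_pow_left₀ (le_of_lt (lt_of_lt_of_le hφmin hx.1)) hx.2 m

lemma first_pos [IsProbabilityMeasure ν] (hφmin : 0 < φmin)
    (hsupp : ∀ᵐ x ∂ν, x ∈ Set.Icc φmin φmax) : 0 < firstMoment ν := by
  have h1 : Integrable (fun x : ℝ => x) ν := by simpa using integ_pow hφmin hsupp 1
  have h2 := integral_mono_ae (integrable_const φmin) h1 (hsupp.mono fun x hx => hx.1)
  have h3 : ∫ _x, φmin ∂ν = φmin := by simp
  rw [h3] at h2
  calc (0:ℝ) < φmin := hφmin
  _ ≤ ∫ x, x ∂ν := h2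
  _ = firstMoment ν := rfl

lemma lint_first [IsProbabilityMeasure ν] (hφmin : 0 < φmin)
    (hsupp : ∀ᵐ x ∂ν, x ∈ Set.Icc φmin φmax) :
    ∫⁻ x, ENNReal.ofReal x ∂ν = ENNReal.ofReal (firstMoment ν) := by
  have h1 : Integrable (fun x : ℝ => x) ν := by simpa using integ_pow hφmin hsupp 1
  exact (ofReal_integral_eq_lintegral_ofReal h1
    (hsupp.mono fun x hx => le_of_lt (lt_of_lt_of_le hφmin hx.1))).symm

lemma lint_sq [IsProbabilityMeasure ν] (hφmin : 0 < φmin)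
    (hsupp : ∀ᵐ x ∂ν, x ∈ Set.Icc φmin φmax) :
    ∫⁻ x, ENNReal.ofReal (x ^ 2) ∂ν = ENNReal.ofReal (secondMoment ν) := by
  exact (ofReal_integral_eq_lintegral_ofReal (integ_pow hφmin hsupp 2)
    (hsupp.mono fun x hx => by positivity)).symm

lemma ae_sizeBiased (hsupp : ∀ᵐ x ∂ν, x ∈ Set.Icc φmin φmax) :
    ∀ᵐ x ∂(sizeBiased ν), x ∈ Set.Icc φmin φmax :=
  (withDensity_absolutelyContinuous ν _).ae_le hsupp

lemma lint_sb [IsProbabilityMeasure ν] (hφmin : 0 < φmin)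
    (hsupp : ∀ᵐ x ∂ν, x ∈ Set.Icc φmin φmax) :
    ∫⁻ x, ENNReal.ofReal x ∂(sizeBiased ν)
      = ENNReal.ofReal (secondMoment ν / firstMoment ν) := by
  have hΦ : 0 < firstMoment ν := first_pos hφmin hsupp
  rw [sizeBiased, lintegral_withDensity_eq_lintegral_mul ν
    (by fun_prop) measurable_ofReal]
  have hae : ∀ᵐ x ∂ν, ((fun x => ENNReal.ofReal (x / firstMoment ν)) * fun x => ENNReal.ofReal x) x
      = ENNReal.ofReal (1 / firstMoment ν) * ENNReal.ofReal (x ^ 2) := by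
    filter_upwards [hsupp] with x hx
    have hx0 : 0 ≤ x := le_of_lt (lt_of_lt_of_le hφmin hx.1)
    simp only [Pi.mul_apply]
    rw [← ENNReal.ofReal_mul (by positivity), ← ENNReal.ofReal_mul (by positivity)]
    congr 1
    field_simp
  rw [lintegral_congr_ae hae, lintegral_const_mul _ (by fun_prop), lint_sq hφmin hsupp,
    ← ENNReal.ofReal_mul (by positivity)]
  congr 1
  field_simp

end BrAux

namespace BrAux
open MeasureTheory ProbabilityTheory Filter Topology ENNReal

instance instMeasSpace {a b : ℝ} {ν : Measure ℝ} (M : TPoiTree a b ν) :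
    MeasurableSpace M.Ω := M.mΩ

instance instProb {a b : ℝ} {ν : Measure ℝ} (M : TPoiTree a b ν) :
    IsProbabilityMeasure M.P := M.hP

/-- The law of the weight of vertex `u`. -/
def muOf (ν : Measure ℝ) (u : List ℕ) : Measure ℝ := if u = [] then ν else sizeBiased ν

variable {a b φmin φmax : ℝ} {ν : Measure ℝ}

lemma pair_law (M : TPoiTree a b ν) (u : List ℕ) (j k : ℕ) :
    M.P {ω | M.nSame u ω = j ∧ M.nOpp u ω = k}
      = ∫⁻ x, ENNReal.ofReal (poissonPMF (a / 2 * firstMoment ν * x) j *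
          poissonPMF (b / 2 * firstMoment ν * x) k) ∂(muOf ν u) := by
  by_cases hu : u = []
  · subst hu
    have := M.root_law j k Set.univ MeasurableSet.univ
    rw [Measure.restrict_univ] at this
    rw [muOf, if_pos rfl, ← this]
    congr 1
    ext ω
    simp
  · have := M.child_law u hu j k Set.univ MeasurableSet.univ
    rw [Measure.restrict_univ] at this
    rw [muOf, if_neg hu, ← this]
    congr 1
    ext ω
    simp

lemma meas_pair (M : TPoiTree a b ν) (u : List ℕ) (j k : ℕ) :
    MeasurableSet {ω | M.nSame u ω = j ∧ M.nOpp u ω = k} :=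
  ((M.meas_nSame u) (measurableSet_singleton j)).inter
    ((M.meas_nOpp u) (measurableSet_singleton k))

lemma meas_tail (M : TPoiTree a b ν) (u : List ℕ) (c : ℕ) :
    MeasurableSet {ω | c < M.nSame u ω + M.nOpp u ω} :=
  ((M.meas_nSame u).add (M.meas_nOpp u)) measurableSet_Ioi

lemma q_eq (M : TPoiTree a b ν) (u : List ℕ) (c : ℕ) :
    M.P {ω | c < M.nSame u ω + M.nOpp u ω}
      = ∑' p : ℕ × ℕ, if c < p.1 + p.2
          then M.P {ω | M.nSame u ω = p.1 ∧ M.nOpp u ω = p.2} else 0 := by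
  set g : ℕ × ℕ → Set M.Ω := fun p =>
    if c < p.1 + p.2 then {ω | M.nSame u ω = p.1 ∧ M.nOpp u ω = p.2} else ∅ with hg
  have hmem : ∀ p ω, ω ∈ g p → (M.nSame u ω, M.nOpp u ω) = p ∧ c < p.1 + p.2 := by
    intro p ω h
    by_cases hc : c < p.1 + p.2
    · simp only [hg, if_pos hc] at h
      exact ⟨Prod.ext h.1 h.2, hc⟩
    · simp [hg, if_neg hc] at h
  have hmeas : ∀ p, MeasurableSet (g p) := by
    intro p
    by_cases hc : c < p.1 + p.2
    · rw [hg]; simpa [if_pos hc] using meas_pair M u p.1 p.2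
    · rw [hg]; simp [if_neg hc]
  have hdisj : Pairwise (Function.onFun Disjoint g) := by
    intro p p' hne
    rw [Function.onFun, Set.disjoint_left]
    intro ω h1 h2
    exact hne ((hmem p ω h1).1.symm.trans (hmem p' ω h2).1)
  have hunion : (⋃ p, g p) = {ω | c < M.nSame u ω + M.nOpp u ω} := by
    ext ω
    constructor
    · rintro ⟨s, ⟨p, rfl⟩, h⟩
      obtain ⟨hp, hc⟩ := hmem p ω h
      have : c < M.nSame u ω + M.nOpp u ω := by
        rw [← hp] at hc; exact hc
      exact this
    · intro h
      exact Set.mem_iUnion.2 ⟨(M.nSame u ω, M.nOpp u ω), by simp [hg]; exact h⟩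
  rw [← hunion, measure_iUnion hdisj hmeas]
  refine tsum_congr fun p => ?_
  by_cases hc : c < p.1 + p.2
  · simp [hg, if_pos hc]
  · simp [hg, if_neg hc]

lemma tsum_ite_lt (m : ℕ) (t : ℝ≥0∞) :
    ∑' c : ℕ, (if c < m then t else 0) = m * t := by
  rw [tsum_eq_sum (s := Finset.range m) (fun c hc => if_neg (by simpa using hc))]
  rw [Finset.sum_congr rfl (fun c hc => if_pos (Finset.mem_range.1 hc)),
    Finset.sum_const, Finset.card_range, nsmul_eq_mul]

end BrAux

namespace BrAux
open MeasureTheory ProbabilityTheory Filter Topology ENNReal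

variable {a b φmin φmax : ℝ} {ν : Measure ℝ}

lemma ae_muOf (hsupp : ∀ᵐ x ∂ν, x ∈ Set.Icc φmin φmax) (u : List ℕ) :
    ∀ᵐ x ∂(muOf ν u), x ∈ Set.Icc φmin φmax := by
  by_cases hu : u = []
  · rw [muOf, if_pos hu]; exact hsupp
  · rw [muOf, if_neg hu]; exact ae_sizeBiased hsupp

lemma gsum [IsProbabilityMeasure ν] (M : TPoiTree a b ν)
    (ha : 0 < a) (hb : 0 < b) (hφmin : 0 < φmin)
    (hsupp : ∀ᵐ x ∂ν, x ∈ Set.Icc φmin φmax) (u : List ℕ) :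
    ∑' c : ℕ, M.P {ω | c < M.nSame u ω + M.nOpp u ω}
      = ENNReal.ofReal ((a + b) / 2 * firstMoment ν) * ∫⁻ x, ENNReal.ofReal x ∂(muOf ν u) := by
  have hΦ : 0 < firstMoment ν := first_pos hφmin hsupp
  have hmeas : ∀ p : ℕ × ℕ, Measurable fun x : ℝ =>
      ENNReal.ofReal (poissonPMF (a / 2 * firstMoment ν * x) p.1 *
        poissonPMF (b / 2 * firstMoment ν * x) p.2) := fun p =>
    ((meas_poisfn _ _).mul (meas_poisfn _ _)).ennreal_ofReal
  calc ∑' c : ℕ, M.P {ω | c < M.nSame u ω + M.nOpp u ω}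
      = ∑' c : ℕ, ∑' p : ℕ × ℕ, (if c < p.1 + p.2
          then M.P {ω | M.nSame u ω = p.1 ∧ M.nOpp u ω = p.2} else 0) :=
        tsum_congr fun c => q_eq M u c
    _ = ∑' p : ℕ × ℕ, ∑' c : ℕ, (if c < p.1 + p.2
          then M.P {ω | M.nSame u ω = p.1 ∧ M.nOpp u ω = p.2} else 0) := ENNReal.tsum_comm
    _ = ∑' p : ℕ × ℕ, ((p.1 + p.2 : ℕ) : ℝ≥0∞) *
          M.P {ω | M.nSame u ω = p.1 ∧ M.nOpp u ω = p.2} :=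
        tsum_congr fun p => tsum_ite_lt _ _
    _ = ∑' p : ℕ × ℕ, ∫⁻ x, ((p.1 + p.2 : ℕ) : ℝ≥0∞) *
          ENNReal.ofReal (poissonPMF (a / 2 * firstMoment ν * x) p.1 *
            poissonPMF (b / 2 * firstMoment ν * x) p.2) ∂(muOf ν u) := by
        refine tsum_congr fun p => ?_
        rw [pair_law M u p.1 p.2, lintegral_const_mul _ (hmeas p)]
    _ = ∫⁻ x, ∑' p : ℕ × ℕ, ((p.1 + p.2 : ℕ) : ℝ≥0∞) *
          ENNReal.ofReal (poissonPMF (a / 2 * firstMoment ν * x) p.1 *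
            poissonPMF (b / 2 * firstMoment ν * x) p.2) ∂(muOf ν u) :=
        (lintegral_tsum fun p => ((hmeas p).const_mul _).aemeasurable).symm
    _ = ∫⁻ x, ENNReal.ofReal ((a + b) / 2 * firstMoment ν) * ENNReal.ofReal x ∂(muOf ν u) := by
        refine lintegral_congr_ae ?_
        filter_upwards [ae_muOf hsupp u] with x hx
        have hx0 : 0 ≤ x := le_of_lt (lt_of_lt_of_le hφmin hx.1)
        rw [epois_pair (by positivity) (by positivity), ← ENNReal.ofReal_mul (by positivity)]
        congr 1
        ring
    _ = ENNReal.ofReal ((a + b) / 2 * firstMoment ν) * ∫⁻ x, ENNReal.ofReal x ∂(muOf ν u) :=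
        lintegral_const_mul _ measurable_ofReal

lemma gsum_ne_nil [IsProbabilityMeasure ν] (M : TPoiTree a b ν)
    (ha : 0 < a) (hb : 0 < b) (hφmin : 0 < φmin)
    (hsupp : ∀ᵐ x ∂ν, x ∈ Set.Icc φmin φmax) (u : List ℕ) (hu : u ≠ []) :
    ∑' c : ℕ, M.P {ω | c < M.nSame u ω + M.nOpp u ω}
      = ENNReal.ofReal ((a + b) / 2 * secondMoment ν) := by
  have hΦ : 0 < firstMoment ν := first_pos hφmin hsupp
  rw [gsum M ha hb hφmin hsupp u, muOf, if_neg hu, lint_sb hφmin hsupp,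
    ← ENNReal.ofReal_mul (by positivity)]
  congr 1
  field_simp

lemma gsum_nil [IsProbabilityMeasure ν] (M : TPoiTree a b ν)
    (ha : 0 < a) (hb : 0 < b) (hφmin : 0 < φmin)
    (hsupp : ∀ᵐ x ∂ν, x ∈ Set.Icc φmin φmax) :
    ∑' c : ℕ, M.P {ω | c < M.nSame [] ω + M.nOpp [] ω}
      = ENNReal.ofReal ((a + b) / 2 * firstMoment ν * firstMoment ν) := by
  have hΦ : 0 < firstMoment ν := first_pos hφmin hsupp
  rw [gsum M ha hb hφmin hsupp List.nil, muOf, if_pos rfl, lint_first hφmin hsupp,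
    ← ENNReal.ofReal_mul (by positivity)]

end BrAux

namespace BrAux
open MeasureTheory ProbabilityTheory Filter Topology ENNReal

variable {a b : ℝ} {ν : Measure ℝ}

lemma prob_memTree (M : TPoiTree a b ν) (v : List ℕ) :
    M.P {ω | memTree M ω v}
      = ∏ k ∈ Finset.range v.length,
          M.P {ω | v.getD k 0 < M.nSame (v.take k) ω + M.nOpp (v.take k) ω} := by
  classical
  set n := v.length with hn
  set sets : Option (List ℕ) → Set (ℕ × ℕ × ℝ × Bool) := fun o => match o with
    | none => Set.univ
    | some u => {p : ℕ × ℕ × ℝ × Bool | v.getD u.length 0 < p.1 + p.2.1} with hsets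
  have hmeas : ∀ o, MeasurableSet (sets o) := by
    rintro (_ | u)
    · exact MeasurableSet.univ
    · exact measurableSet_lt measurable_const
        (measurable_fst.add (measurable_fst.comp measurable_snd))
  set S : Finset (Option (List ℕ)) :=
    (Finset.range n).image (fun k => (some (v.take k) : Option (List ℕ))) with hS
  have key := M.indep.measure_inter_preimage_eq_mul (S := S) (sets := sets)
    (fun i _ => hmeas i)
  have hinj : ∀ x ∈ Finset.range n, ∀ y ∈ Finset.range n,
      (some (v.take x) : Option (List ℕ)) = some (v.take y) → x = y := by
    intro x hx y hy hxy
    have hx' := Finset.mem_range.1 hx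
    have hy' := Finset.mem_range.1 hy
    have : (v.take x).length = (v.take y).length := by rw [Option.some_inj.1 hxy]
    simpa [List.length_take, Nat.min_eq_left (le_of_lt hx' : x ≤ v.length), Nat.min_eq_left (le_of_lt hy' : y ≤ v.length)]
      using this
  rw [hS, Finset.set_biInter_finset_image, Finset.prod_image hinj] at key
  have hfact : ∀ k ∈ Finset.range n,
      ((fun o ω => match o with
        | none => ((0 : ℕ), (0 : ℕ), (0 : ℝ), M.rootSpin ω)
        | some u => (M.nSame u ω, M.nOpp u ω, M.wt u ω, false)) (some (v.take k)))
        ⁻¹' sets (some (v.take k))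
      = {ω | v.getD k 0 < M.nSame (v.take k) ω + M.nOpp (v.take k) ω} := by
    intro k hk
    ext ω
    simp [hsets, List.length_take, Nat.min_eq_left (le_of_lt (Finset.mem_range.1 hk) : k ≤ v.length)]
  have hset : (⋂ k ∈ Finset.range n,
      ((fun o ω => match o with
        | none => ((0 : ℕ), (0 : ℕ), (0 : ℝ), M.rootSpin ω)
        | some u => (M.nSame u ω, M.nOpp u ω, M.wt u ω, false)) (some (v.take k)))
        ⁻¹' sets (some (v.take k)))
      = {ω | memTree M ω v} := by
    rw [Set.iInter₂_congr hfact]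
    ext ω
    simp only [Set.mem_iInter, Set.mem_setOf_eq]
    constructor
    · intro h
      intro k hk
      have h2 := h k (Finset.mem_range.2 hk)
      rw [List.getD_eq_getElem v 0 hk] at h2
      rwa [List.get_eq_getElem]
    · intro h k hk
      have hk' := Finset.mem_range.1 hk
      have h2 := h k hk'
      rw [List.getD_eq_getElem v 0 hk']
      rwa [List.get_eq_getElem] at h2
  rw [hset] at key
  rw [key]
  refine Finset.prod_congr rfl fun k hk => ?_
  rw [hfact k hk]

end BrAux

namespace BrAux
open MeasureTheory ProbabilityTheory Filter Topology ENNReal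

variable {a b φmin φmax : ℝ} {ν : Measure ℝ}

/-- `P(c < nSame u + nOpp u)`. -/
def qv {a b : ℝ} {ν : Measure ℝ} (M : TPoiTree a b ν) (u : List ℕ) (c : ℕ) : ℝ≥0∞ :=
  M.P {ω | c < M.nSame u ω + M.nOpp u ω}

/-- Expected number of vertices at depth `n` below a (virtual) vertex `u`. -/
def Rfun {a b : ℝ} {ν : Measure ℝ} (M : TPoiTree a b ν) : ℕ → List ℕ → ℝ≥0∞
  | 0, _ => 1
  | n+1, u => ∑' c : ℕ, qv M u c * Rfun M n (u ++ [c])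

lemma R_const [IsProbabilityMeasure ν] (M : TPoiTree a b ν)
    (ha : 0 < a) (hb : 0 < b) (hφmin : 0 < φmin)
    (hsupp : ∀ᵐ x ∂ν, x ∈ Set.Icc φmin φmax) :
    ∀ (n : ℕ) (u : List ℕ), u ≠ [] →
      Rfun M n u = (ENNReal.ofReal ((a + b) / 2 * secondMoment ν)) ^ n := by
  intro n
  induction n with
  | zero => intro u _; rw [Rfun, pow_zero]
  | succ n IH =>
    intro u hu
    rw [Rfun]
    have h1 : ∀ c : ℕ, Rfun M n (u ++ [c])
        = (ENNReal.ofReal ((a + b) / 2 * secondMoment ν)) ^ n := fun c =>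
      IH (u ++ [c]) (by simp)
    simp only [h1]
    have h2 : (∑' c : ℕ, qv M u c) = ENNReal.ofReal ((a + b) / 2 * secondMoment ν) :=
      gsum_ne_nil M ha hb hφmin hsupp u hu
    rw [ENNReal.tsum_mul_right, h2, ← pow_succ']

lemma R_root [IsProbabilityMeasure ν] (M : TPoiTree a b ν)
    (ha : 0 < a) (hb : 0 < b) (hφmin : 0 < φmin)
    (hsupp : ∀ᵐ x ∂ν, x ∈ Set.Icc φmin φmax) (n : ℕ) :
    Rfun M (n + 1) ([] : List ℕ) = ENNReal.ofReal ((a + b) / 2 * firstMoment ν * firstMoment ν) *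
      (ENNReal.ofReal ((a + b) / 2 * secondMoment ν)) ^ n := by
  rw [Rfun]
  have h1 : ∀ c : ℕ, Rfun M n ([] ++ [c])
      = (ENNReal.ofReal ((a + b) / 2 * secondMoment ν)) ^ n := fun c =>
    R_const M ha hb hφmin hsupp n ([] ++ [c]) (by simp)
  simp only [h1]
  have h2 : (∑' c : ℕ, qv M List.nil c)
      = ENNReal.ofReal ((a + b) / 2 * firstMoment ν * firstMoment ν) :=
    gsum_nil M ha hb hφmin hsupp
  rw [ENNReal.tsum_mul_right, h2]

lemma R_eq_sum (M : TPoiTree a b ν) :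
    ∀ (n : ℕ) (u : List ℕ), Rfun M n u
      = ∑' w : List ℕ, if w.length = n
          then ∏ k ∈ Finset.range n, qv M (u ++ w.take k) (w.getD k 0) else 0 := by
  intro n
  induction n with
  | zero =>
    intro u
    rw [Rfun]
    symm
    rw [tsum_eq_single ([] : List ℕ)
      (fun w hw => if_neg (fun hlen => hw (List.length_eq_zero_iff.1 hlen)))]
    simp
  | succ n IH =>
    intro u
    rw [Rfun]
    symm
    have hinj : Function.Injective (fun p : ℕ × List ℕ => p.1 :: p.2) := by
      intro p q h
      simp only [List.cons.injEq] at h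
      exact Prod.ext h.1 h.2
    have hsupport : Function.support (fun w : List ℕ => if w.length = n + 1
        then ∏ k ∈ Finset.range (n+1), qv M (u ++ w.take k) (w.getD k 0) else 0)
        ⊆ Set.range (fun p : ℕ × List ℕ => p.1 :: p.2) := by
      intro w hw
      rcases w with _ | ⟨c, t⟩
      · simp at hw
      · exact ⟨(c, t), rfl⟩
    rw [← hinj.tsum_eq hsupport]
    have hterm : ∀ p : ℕ × List ℕ,
        (if (p.1 :: p.2).length = n + 1
          then ∏ k ∈ Finset.range (n+1), qv M (u ++ (p.1 :: p.2).take k) ((p.1 :: p.2).getD k 0)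
          else 0)
        = qv M u p.1 * (if p.2.length = n
            then ∏ k ∈ Finset.range n, qv M ((u ++ [p.1]) ++ p.2.take k) (p.2.getD k 0) else 0) := by
      rintro ⟨c, t⟩
      by_cases ht : t.length = n
      · rw [if_pos (show ((c :: t).length = n + 1) by simp [ht]), if_pos ht]
        rw [Finset.prod_range_succ' (fun k => qv M (u ++ (c :: t).take k) ((c :: t).getD k 0)) n]
        rw [mul_comm]
        congr 1
        · simp
        · refine Finset.prod_congr rfl fun k _ => ?_
          rw [List.take_succ_cons, List.getD_cons_succ, List.append_cons]
      · rw [if_neg (by simp [ht]), if_neg ht, mul_zero]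
    rw [tsum_congr hterm, ENNReal.tsum_prod (f := fun (c : ℕ) (t : List ℕ) =>
      qv M u c * (if t.length = n
        then ∏ k ∈ Finset.range n, qv M ((u ++ [c]) ++ t.take k) (t.getD k 0) else 0))]
    refine tsum_congr fun c => ?_
    rw [ENNReal.tsum_mul_left, ← IH (u ++ [c])]

end BrAux

namespace BrAux
open MeasureTheory ProbabilityTheory Filter Topology ENNReal

variable {a b φmin φmax : ℝ} {ν : Measure ℝ}

/-- Number of tree vertices at depth `n`. -/
def Zlev {a b : ℝ} {ν : Measure ℝ} (M : TPoiTree a b ν) (n : ℕ) (ω : M.Ω) : ℝ≥0∞ :=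
  ∑' v : List ℕ, {ω' : M.Ω | v.length = n ∧ memTree M ω' v}.indicator (fun _ => (1:ℝ≥0∞)) ω

lemma memTree_eq (M : TPoiTree a b ν) (v : List ℕ) :
    {ω | memTree M ω v} = ⋂ k ∈ Finset.range v.length,
      {ω | v.getD k 0 < M.nSame (v.take k) ω + M.nOpp (v.take k) ω} := by
  ext ω
  simp only [Set.mem_iInter, Set.mem_setOf_eq, Finset.mem_range]
  constructor
  · intro h k hk
    have h2 := h k hk
    rw [List.getD_eq_getElem v 0 hk]
    rw [List.get_eq_getElem] at h2
    exact h2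
  · intro h k hk
    have h2 := h k hk
    rw [List.getD_eq_getElem v 0 hk] at h2
    rw [List.get_eq_getElem]
    exact h2

lemma meas_memTree (M : TPoiTree a b ν) (v : List ℕ) :
    MeasurableSet {ω | memTree M ω v} := by
  rw [memTree_eq]
  exact MeasurableSet.biInter (Finset.range _).countable_toSet (fun k _ => meas_tail M _ _)

lemma meas_lev (M : TPoiTree a b ν) (n : ℕ) (v : List ℕ) :
    MeasurableSet {ω | v.length = n ∧ memTree M ω v} := by
  by_cases h : v.length = n
  · have : {ω | v.length = n ∧ memTree M ω v} = {ω | memTree M ω v} := by ext; simp [h]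
    rw [this]; exact meas_memTree M v
  · have : {ω | v.length = n ∧ memTree M ω v} = ∅ := by ext; simp [h]
    rw [this]; exact MeasurableSet.empty

lemma meas_Zlev (M : TPoiTree a b ν) (n : ℕ) : Measurable (Zlev M n) :=
  Measurable.ennreal_tsum fun v => measurable_const.indicator (meas_lev M n v)

lemma lint_Zlev (M : TPoiTree a b ν) (n : ℕ) :
    ∫⁻ ω, Zlev M n ω ∂M.P = Rfun M n ([] : List ℕ) := by
  rw [show (fun ω => Zlev M n ω) = Zlev M n from rfl]
  unfold Zlev
  rw [lintegral_tsum (fun v => (measurable_const.indicator (meas_lev M n v)).aemeasurable)]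
  rw [R_eq_sum M n ([] : List ℕ)]
  refine tsum_congr fun v => ?_
  rw [lintegral_indicator_const (meas_lev M n v), one_mul]
  by_cases h : v.length = n
  · rw [if_pos h]
    have hset : {ω | v.length = n ∧ memTree M ω v} = {ω | memTree M ω v} := by ext; simp [h]
    rw [hset, prob_memTree M v, h]
    exact Finset.prod_congr rfl fun k _ => rfl
  · rw [if_neg h]
    have hset : {ω | v.length = n ∧ memTree M ω v} = ∅ := by ext; simp [h]
    rw [hset, measure_empty]

set_option maxHeartbeats 1000000 in
lemma tsum_R_lt_top [IsProbabilityMeasure ν] (M : TPoiTree a b ν)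
    (ha : 0 < a) (hb : 0 < b) (hφmin : 0 < φmin)
    (hsupp : ∀ᵐ x ∂ν, x ∈ Set.Icc φmin φmax) {q : ℝ}
    (hlam : 0 ≤ (a + b) / 2 * secondMoment ν)
    (hq : (a + b) / 2 * secondMoment ν < q) :
    ∑' n : ℕ, (ENNReal.ofReal (1/q)) ^ n * Rfun M n ([] : List ℕ) < ⊤ := by
  have hq0 : 0 < q := lt_of_le_of_lt hlam hq
  set r : ℝ≥0∞ := ENNReal.ofReal (1/q) with hr
  set Λ : ℝ≥0∞ := ENNReal.ofReal ((a + b) / 2 * secondMoment ν) with hΛ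
  set C : ℝ≥0∞ := ENNReal.ofReal ((a + b) / 2 * firstMoment ν * firstMoment ν) with hC
  have hrΛ : r * Λ < 1 := by
    rw [hr, hΛ, ← ENNReal.ofReal_mul (by positivity)]
    refine lt_of_lt_of_le (ENNReal.ofReal_lt_one.2 ?_) le_rfl
    rw [div_mul_eq_mul_div, one_mul, div_lt_one hq0]
    exact hq
  rw [tsum_eq_zero_add' ENNReal.summable]
  have h0 : r ^ 0 * Rfun M 0 ([] : List ℕ) = 1 := by rw [pow_zero, one_mul, Rfun]
  have hsucc : ∀ n : ℕ, r ^ (n+1) * Rfun M (n+1) ([] : List ℕ) = (r * C) * (r * Λ) ^ n := by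
    intro n
    rw [R_root M ha hb hφmin hsupp n, ← hΛ, ← hC, pow_succ, mul_pow]
    ring
  rw [h0, tsum_congr hsucc, ENNReal.tsum_mul_left, ENNReal.tsum_geometric]
  have h1 : r * C ≠ ⊤ := by
    rw [hr, hC, ← ENNReal.ofReal_mul (by positivity)]
    exact ENNReal.ofReal_ne_top
  have h2 : (1 - r * Λ)⁻¹ ≠ ⊤ := by
    rw [ENNReal.inv_ne_top]
    intro h
    rw [tsub_eq_zero_iff_le] at h
    exact absurd (lt_of_lt_of_le hrΛ h) (lt_irrefl _)
  exact lt_of_le_of_lt le_rfl (by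
    rw [lt_top_iff_ne_top]
    exact ENNReal.add_ne_top.2 ⟨ENNReal.one_ne_top, ENNReal.mul_ne_top h1 h2⟩)

lemma ae_tsum_fin [IsProbabilityMeasure ν] (M : TPoiTree a b ν)
    (ha : 0 < a) (hb : 0 < b) (hφmin : 0 < φmin)
    (hsupp : ∀ᵐ x ∂ν, x ∈ Set.Icc φmin φmax) {q : ℝ}
    (hlam : 0 ≤ (a + b) / 2 * secondMoment ν)
    (hq : (a + b) / 2 * secondMoment ν < q) :
    ∀ᵐ ω ∂M.P, ∑' n : ℕ, (ENNReal.ofReal (1/q)) ^ n * Zlev M n ω < ⊤ := by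
  refine ae_lt_top (Measurable.ennreal_tsum fun n => (meas_Zlev M n).const_mul _) ?_
  rw [lintegral_tsum (fun n => ((meas_Zlev M n).const_mul _).aemeasurable)]
  have h1 : ∀ n : ℕ, ∫⁻ ω, (ENNReal.ofReal (1/q)) ^ n * Zlev M n ω ∂M.P
      = (ENNReal.ofReal (1/q)) ^ n * Rfun M n ([] : List ℕ) := fun n => by
    rw [lintegral_const_mul _ (meas_Zlev M n), lint_Zlev M n]
  rw [tsum_congr h1]
  exact (tsum_R_lt_top M ha hb hφmin hsupp hlam hq).ne

end BrAux

namespace BrAux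
open MeasureTheory ProbabilityTheory Filter Topology ENNReal

variable {a b φmin φmax : ℝ} {ν : Measure ℝ}

lemma pointwise (M : TPoiTree a b ν) (ω : M.Ω)
    (hsup : 1 < (a + b) / 2 * secondMoment ν)
    (H : ∀ L : ℚ, (a + b) / 2 * secondMoment ν < (L:ℝ) →
      ∑' n : ℕ, (ENNReal.ofReal (1/(L:ℝ))) ^ n * Zlev M n ω < ⊤) :
    branchingNumber {v : List ℕ | memTree M ω v} ≤ (a + b) / 2 * secondMoment ν := by
  rw [branchingNumber]
  split_ifs with hinf
  swap
  · exact le_of_lt (lt_trans zero_lt_one hsup)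
  refine Real.sSup_le ?_ (le_of_lt (lt_trans zero_lt_one hsup))
  rintro lam ⟨hlam1, hpos⟩
  by_contra hcon
  push_neg at hcon
  obtain ⟨L, hL1, hL2⟩ := exists_rat_btwn hcon
  have hq0 : (0:ℝ) < (L:ℝ) := lt_trans (lt_trans zero_lt_one hsup) hL1
  set T := {v : List ℕ | memTree M ω v} with hT
  have hray : ∀ f : ℕ → List ℕ, IsRay T f → ∀ k, (f k).length = k := by
    intro f hf k
    induction k with
    | zero => simp [hf.1]
    | succ k IH =>
      obtain ⟨i, hi⟩ := (hf.2 k).2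
      rw [hi, List.length_append, IH]
      rfl
  have hcut : ∀ n : ℕ, IsCutset T {v : List ℕ | v.length = n ∧ memTree M ω v} := by
    intro n
    constructor
    · intro v hv; exact hv.2
    · intro f hf; exact ⟨n, hray f hf n, (hf.2 n).1⟩
  have hbound : ∀ n : ℕ, cutsetSum lam {v : List ℕ | v.length = n ∧ memTree M ω v}
      ≤ (ENNReal.ofReal (1/(L:ℝ)))^n * Zlev M n ω := by
    intro n
    rw [cutsetSum]
    calc ∑' v : {v : List ℕ | v.length = n ∧ memTree M ω v},
          ENNReal.ofReal ((1/lam)^(v : List ℕ).length)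
        ≤ ∑' _v : {v : List ℕ | v.length = n ∧ memTree M ω v},
            ENNReal.ofReal ((1/(L:ℝ))^n) := by
          refine ENNReal.tsum_le_tsum fun v => ?_
          rw [v.2.1]
          refine ENNReal.ofReal_le_ofReal (pow_le_pow_left₀ (by positivity) ?_ n)
          exact one_div_le_one_div_of_le hq0 (le_of_lt hL2)
      _ = ENNReal.ofReal ((1/(L:ℝ))^n) *
            (∑' _v : {v : List ℕ | v.length = n ∧ memTree M ω v}, (1:ℝ≥0∞)) := by
          rw [← ENNReal.tsum_mul_left]
          exact tsum_congr fun v => (mul_one _).symm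
      _ = (ENNReal.ofReal (1/(L:ℝ)))^n * Zlev M n ω := by
          congr 1
          · rw [ENNReal.ofReal_pow (by positivity)]
          · rw [tsum_subtype {v : List ℕ | v.length = n ∧ memTree M ω v} (fun _ => (1:ℝ≥0∞))]
            unfold Zlev
            refine tsum_congr fun v => ?_
            by_cases h : v.length = n ∧ memTree M ω v
            · simp [Set.indicator_apply, h]
            · simp [Set.indicator_apply, h]
  have hL1' : (a + b) / 2 * secondMoment ν < (L:ℝ) := hL1
  have htend := ENNReal.tendsto_atTop_zero_of_tsum_ne_top (H L hL1').ne
  obtain ⟨n, hn⟩ := (htend.eventually (gt_mem_nhds hpos)).exists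
  have hinf_le : (⨅ Γ ∈ {Γ' | IsCutset T Γ'}, cutsetSum lam Γ)
      ≤ (ENNReal.ofReal (1/(L:ℝ)))^n * Zlev M n ω :=
    le_trans (iInf₂_le _ (hcut n)) (hbound n)
  exact absurd (lt_of_le_of_lt hinf_le hn) (lt_irrefl _)

end BrAux
/-- **Upper bound on the branching number of `T^Poi`.**
Assume `((a+b)/2)·Φ⁽²⁾ > 1`.  Consider the multi-type branching process `T^Poi` where the root
has a uniform spin in `{+,-}` and weight governed by `ν`.  Then, conditionally on the event
that the branching process does not go extinct (i.e. that the tree is infinite),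
`Br(T^Poi) ≤ ((a+b)/2)·Φ⁽²⁾` almost surely. -/
theorem stmt4
    (a b φmin φmax : ℝ) (ha : 0 < a) (hb : 0 < b)
    (hφmin : 0 < φmin) (hφ : φmin ≤ φmax)
    (ν : Measure ℝ) (hν : IsProbabilityMeasure ν)
    (hsupp : ∀ᵐ x ∂ν, x ∈ Set.Icc φmin φmax)
    (hsup : 1 < (a + b) / 2 * secondMoment ν)
    (M : TPoiTree a b ν) :
    ∀ᵐ ω ∂(M.P[|{ω' | {v : List ℕ | memTree M ω' v}.Infinite}]),
      branchingNumber {v : List ℕ | memTree M ω v} ≤ (a + b) / 2 * secondMoment ν := by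
  haveI := hν
  have hl0 : (0:ℝ) ≤ (a + b) / 2 * secondMoment ν := le_of_lt (lt_trans zero_lt_one hsup)
  have hall : ∀ᵐ ω ∂M.P, ∀ L : ℚ, (a + b) / 2 * secondMoment ν < (L:ℝ) →
      ∑' n : ℕ, (ENNReal.ofReal (1/(L:ℝ))) ^ n * BrAux.Zlev M n ω < ⊤ := by
    rw [MeasureTheory.ae_all_iff]
    intro L
    by_cases hL : (a + b) / 2 * secondMoment ν < (L:ℝ)
    · filter_upwards [BrAux.ae_tsum_fin M ha hb hφmin hsupp hl0 hL] with ω hω _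
      exact hω
    · exact Filter.Eventually.of_forall fun ω hc => absurd hc hL
  have hP : ∀ᵐ ω ∂M.P,
      branchingNumber {v : List ℕ | memTree M ω v} ≤ (a + b) / 2 * secondMoment ν := by
    filter_upwards [hall] with ω hω
    exact BrAux.pointwise M ω hsup hω
  exact Filter.Eventually.filter_mono ProbabilityTheory.cond_absolutelyContinuous.ae_le hP
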